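/- Let s ≥ 3/2 be real. The equation log ω − ω/(2+s) + ((1+s)/(2+s))·(1/ω) = s/(2+s) has a unique solution ω_0 on the interval (1, ∞); moreover ω_0 ∈ [1+s, ω_+], where ω_+ = −(2+s)·W_{−1}(−e^{(s−1)/(2+s)}/(2+s)) and W_{−1} is the lower real branch of the Lambert W function. -/

import Mathlib

open Real Set

private lemma aux16_log3 : 1 < Real.log 3 := by
  rw [Real.lt_log_iff_exp_lt (by norm_num : (0:ℝ) < 3)]
  exact lt_trans Real.exp_one_lt_d9 (by norm_num)

private lemma aux16_derivF (s x : ℝ) (hx : 0 < x) :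
    HasDerivAt (fun y : ℝ => Real.log y - y / (2 + s)) (1 / x - 1 / (2 + s)) x := by
  have h1 := Real.hasDerivAt_log hx.ne'
  have h2 : HasDerivAt (fun y : ℝ => y / (2 + s)) (1 / (2 + s)) x := by
    simpa using (hasDerivAt_id x).div_const (2 + s)
  exact (h1.sub h2).congr_deriv (by simp [one_div])

private lemma aux16_derivK (s x : ℝ) (hx : 0 < x) :
    HasDerivAt (fun y : ℝ => Real.log y - y / (2 + s) + (1 + s) / (2 + s) * (1 / y) - s / (2 + s))
      (1 / x - 1 / (2 + s) - (1 + s) / (2 + s) * (1 / x ^ 2)) x := by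
  have h1 := aux16_derivF s x hx
  have h2 : HasDerivAt (fun y : ℝ => (1 + s) / (2 + s) * (1 / y))
      ((1 + s) / (2 + s) * (-(x ^ 2)⁻¹)) x := by
    simpa [one_div] using (hasDerivAt_inv hx.ne').const_mul ((1 + s) / (2 + s))
  have := (h1.add h2).sub_const (s / (2 + s))
  exact this.congr_deriv (by ring)

theorem stmt16 (s : ℝ) (hs : 3 / 2 ≤ s) :
    ∃ ω₀ ωp : ℝ,
      (1 < ω₀ ∧ Real.log ω₀ - ω₀ / (2 + s) + (1 + s) / (2 + s) * (1 / ω₀) = s / (2 + s)) ∧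
      (∀ ω : ℝ, 1 < ω →
        Real.log ω - ω / (2 + s) + (1 + s) / (2 + s) * (1 / ω) = s / (2 + s) → ω = ω₀) ∧
      (2 + s ≤ ωp ∧ Real.log ωp - ωp / (2 + s) = (s - 1) / (2 + s)) ∧
      (∀ ω : ℝ, 2 + s ≤ ω → Real.log ω - ω / (2 + s) = (s - 1) / (2 + s) → ω = ωp) ∧
      ω₀ ∈ Set.Icc (1 + s) ωp := by
  have hc : (0:ℝ) < 2 + s := by linarith
  set F : ℝ → ℝ := fun x => Real.log x - x / (2 + s) with hFdef
  set K : ℝ → ℝ := fun x =>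
    Real.log x - x / (2 + s) + (1 + s) / (2 + s) * (1 / x) - s / (2 + s) with hKdef
  -- continuity
  have hFcont : ∀ t : Set ℝ, (∀ x ∈ t, (0:ℝ) < x) → ContinuousOn F t := by
    intro t ht
    exact (Real.continuousOn_log.mono fun x hx => (ht x hx).ne').sub
      (continuous_id.div_const _).continuousOn
  have hKcont : ∀ t : Set ℝ, (∀ x ∈ t, (0:ℝ) < x) → ContinuousOn K t := by
    intro t ht
    exact ((hFcont t ht).add (continuousOn_const.mul
      (continuousOn_const.div continuousOn_id fun x hx => (ht x hx).ne'))).sub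
      continuousOn_const
  -- F strictly decreasing on [2+s, ∞)
  have hFanti : StrictAntiOn F (Ici (2 + s)) := by
    apply strictAntiOn_of_deriv_neg (convex_Ici _)
      (hFcont _ fun x hx => lt_of_lt_of_le hc hx)
    intro x hx
    rw [interior_Ici] at hx
    have hx0 : (0:ℝ) < x := lt_trans hc hx
    rw [(aux16_derivF s x hx0).deriv]
    have : 1 / x < 1 / (2 + s) := one_div_lt_one_div_of_lt hc hx
    linarith
  -- K strictly increasing on [1, 1+s]
  have hKmono : StrictMonoOn K (Icc 1 (1 + s)) := by
    apply strictMonoOn_of_deriv_pos (convex_Icc _ _)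
      (hKcont _ fun x hx => lt_of_lt_of_le one_pos hx.1)
    intro x hx
    rw [interior_Icc] at hx
    have hx0 : (0:ℝ) < x := lt_trans one_pos hx.1
    rw [(aux16_derivK s x hx0).deriv]
    have key : ((2 + s) * x - x ^ 2 - (1 + s)) > 0 := by nlinarith [hx.1, hx.2]
    have heq : 1 / x - 1 / (2 + s) - (1 + s) / (2 + s) * (1 / x ^ 2)
        = ((2 + s) * x - x ^ 2 - (1 + s)) / ((2 + s) * x ^ 2) := by
      field_simp
    rw [heq]
    positivity
  -- K strictly decreasing on [1+s, ∞)
  have hKanti : StrictAntiOn K (Ici (1 + s)) := by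
    apply strictAntiOn_of_deriv_neg (convex_Ici _)
      (hKcont _ fun x hx => lt_of_lt_of_le (by linarith) hx)
    intro x hx
    rw [interior_Ici] at hx
    have hx0 : (0:ℝ) < x := lt_trans (by linarith) hx
    rw [(aux16_derivK s x hx0).deriv]
    have hxgt : 1 + s < x := hx
    have key : ((2 + s) * x - x ^ 2 - (1 + s)) < 0 := by
      nlinarith [mul_pos (show (0:ℝ) < x - 1 by linarith) (show (0:ℝ) < x - (1 + s) by linarith)]
    have heq : 1 / x - 1 / (2 + s) - (1 + s) / (2 + s) * (1 / x ^ 2)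
        = ((2 + s) * x - x ^ 2 - (1 + s)) / ((2 + s) * x ^ 2) := by
      field_simp
    rw [heq]
    exact div_neg_of_neg_of_pos key (by positivity)
  -- K 1 = 0
  have hK1 : K 1 = 0 := by
    simp only [hKdef, Real.log_one]
    field_simp
    ring
  -- K (1+s) > 0
  have hK1s : 0 < K (1 + s) := by
    have := hKmono (left_mem_Icc.mpr (by linarith)) (right_mem_Icc.mpr (by linarith))
      (by linarith : (1:ℝ) < 1 + s)
    rw [hK1] at this; exact this
  -- F (2+s) ≥ (s-1)/(2+s)  via  p(x) = log x - 2 + 3/x increasing on [3,∞)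
  have hF2s : (s - 1) / (2 + s) ≤ F (2 + s) := by
    set p : ℝ → ℝ := fun x => Real.log x - 2 + 3 / x with hpdef
    have hpmono : StrictMonoOn p (Ici 3) := by
      apply strictMonoOn_of_deriv_pos (convex_Ici _)
      · exact ((Real.continuousOn_log.mono fun x hx =>
          ne_of_gt (lt_of_lt_of_le (by norm_num) hx)).sub continuousOn_const).add
          (continuousOn_const.div continuousOn_id fun x hx =>
            ne_of_gt (lt_of_lt_of_le (by norm_num) hx))
      · intro x hx
        rw [interior_Ici] at hx
        have hx0 : (0:ℝ) < x := lt_trans (by norm_num) hx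
        have hd : HasDerivAt p (1 / x - 3 / x ^ 2) x := by
          have h1 := Real.hasDerivAt_log hx0.ne'
          have h2 : HasDerivAt (fun y : ℝ => 3 / y) (3 * (-(x ^ 2)⁻¹)) x := by
            simpa [div_eq_mul_inv] using (hasDerivAt_inv hx0.ne').const_mul (3:ℝ)
          have := (h1.sub_const 2).add h2
          exact this.congr_deriv (by ring)
        rw [hd.deriv]
        have heq : 1 / x - 3 / x ^ 2 = (x - 3) / x ^ 2 := by field_simp
        rw [heq]
        have hx3 : (3:ℝ) < x := hx
        apply div_pos (by linarith) (by positivity)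
    have h3le : (3:ℝ) ≤ 2 + s := by linarith
    have hp3 : 0 < p 3 := by
      simp only [hpdef]
      have := aux16_log3
      norm_num
      linarith
    have hple : p 3 ≤ p (2 + s) := by
      rcases eq_or_lt_of_le h3le with h | h
      · rw [h]
      · exact (hpmono (mem_Ici.mpr le_rfl) (mem_Ici.mpr h3le) h).le
    have hp2s : 0 < p (2 + s) := lt_of_lt_of_le hp3 hple
    have hrw : (s - 1) / (2 + s) = 1 - 3 / (2 + s) := by field_simp; ring
    simp only [hpdef] at hp2s
    simp only [hFdef]
    rw [hrw]
    have : (2 + s) / (2 + s) = 1 := div_self hc.ne'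
    linarith [this]
  -- F at M := 4*(2+s)^2 is ≤ -2
  have hFM : F (4 * (2 + s) ^ 2) ≤ -2 := by
    have h1 : Real.log (4 * (2 + s) ^ 2) = 2 * Real.log (2 * (2 + s)) := by
      rw [show 4 * (2 + s) ^ 2 = (2 * (2 + s)) ^ 2 by ring, Real.log_pow]
      norm_num
    have h2 : Real.log (2 * (2 + s)) ≤ 2 * (2 + s) - 1 :=
      Real.log_le_sub_one_of_pos (by linarith)
    have h3 : 4 * (2 + s) ^ 2 / (2 + s) = 4 * (2 + s) := by field_simp
    simp only [hFdef]
    rw [h1, h3]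
    linarith
  -- obtain ωp by IVT
  have hMge : 2 + s ≤ 4 * (2 + s) ^ 2 := by nlinarith
  have hsub : Icc (F (4 * (2 + s) ^ 2)) (F (2 + s)) ⊆ F '' Icc (2 + s) (4 * (2 + s) ^ 2) :=
    intermediate_value_Icc' hMge (hFcont _ fun x hx => lt_of_lt_of_le hc hx.1)
  have hnn : (0:ℝ) ≤ (s - 1) / (2 + s) := div_nonneg (by linarith) hc.le
  obtain ⟨ωp, hωpmem, hωpeq⟩ := hsub ⟨hFM.trans (by linarith : (-2:ℝ) ≤ (s - 1) / (2 + s)), hF2s⟩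
  have hωp_ge : 2 + s ≤ ωp := hωpmem.1
  -- K ωp ≤ 0
  have hKωp : K ωp ≤ 0 := by
    have hωp0 : (0:ℝ) < ωp := lt_of_lt_of_le hc hωp_ge
    have hF' : Real.log ωp - ωp / (2 + s) = (s - 1) / (2 + s) := hωpeq
    have h1 : 1 / ωp ≤ 1 / (1 + s) := by
      apply one_div_le_one_div_of_le (by linarith) (by linarith)
    have h2 : (1 + s) / (2 + s) * (1 / ωp) ≤ 1 / (2 + s) := by
      have h3 : (1 + s) / (2 + s) * (1 / (1 + s)) = 1 / (2 + s) := by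
        field_simp
      calc (1 + s) / (2 + s) * (1 / ωp) ≤ (1 + s) / (2 + s) * (1 / (1 + s)) := by
            apply mul_le_mul_of_nonneg_left h1 (by positivity)
        _ = 1 / (2 + s) := h3
    have hexp : K ωp = (s - 1) / (2 + s) + (1 + s) / (2 + s) * (1 / ωp) - s / (2 + s) := by
      simp only [hKdef]
      linarith [hF']
    rw [hexp]
    have : (s - 1) / (2 + s) + 1 / (2 + s) - s / (2 + s) = 0 := by field_simp; ring
    linarith
  -- obtain ω₀ by IVT on [1+s, ωp]
  have h1sωp : 1 + s ≤ ωp := by linarith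
  have hsub2 : Icc (K ωp) (K (1 + s)) ⊆ K '' Icc (1 + s) ωp :=
    intermediate_value_Icc' h1sωp (hKcont _ fun x hx => lt_of_lt_of_le (by linarith) hx.1)
  obtain ⟨ω₀, hω₀mem, hω₀eq⟩ := hsub2 ⟨hKωp, hK1s.le⟩
  have hω₀gt1 : 1 < ω₀ := by
    have := hω₀mem.1; linarith
  refine ⟨ω₀, ωp, ⟨hω₀gt1, ?_⟩, ?_, ⟨hωp_ge, hωpeq⟩, ?_, hω₀mem⟩
  · -- ω₀ satisfies the equation
    have : K ω₀ = 0 := hω₀eq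
    simp only [hKdef] at this
    linarith
  · -- uniqueness of ω₀
    intro ω hω hωeq
    have hKω : K ω = 0 := by simp only [hKdef]; linarith
    rcases le_or_gt ω (1 + s) with hle | hgt
    · exfalso
      have := hKmono (left_mem_Icc.mpr (by linarith)) (mem_Icc.mpr ⟨hω.le, hle⟩) hω
      rw [hK1, hKω] at this
      exact lt_irrefl 0 this
    · exact hKanti.injOn (mem_Ici.mpr hgt.le) (mem_Ici.mpr hω₀mem.1) (by rw [hKω, hω₀eq])
  · -- uniqueness of ωp
    intro ω hω hωeq
    exact hFanti.injOn (mem_Ici.mpr hω) (mem_Ici.mpr hωp_ge) (hωeq.trans hωpeq.symm)
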